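/- arXiv:1601.01342 — 6 statements merged into one kernel-verified Lean document; each statement's English description precedes it below -/
import Mathlib

section
/- Let s̄ > 0 and let Z ∈ ℂ satisfy Re Z > 0 and Im Z > 0. Let D = {w ∈ ℂ : Re w ≥ 0 and |w| ≤ s̄}, and let w* = −s̄·i (the complex number with real part 0 and imaginary part −s̄). Then w* ∈ D, Re(conj(Z)·w*) = −(Im Z)·s̄, and for every w ∈ D one has Re(conj(Z)·w*) ≤ Re(conj(Z)·w), with equality if and only if w = w*. In other words, w* = 0 − s̄·i is the unique minimizer of w ↦ Re(conj(Z)·w) over D. -/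
open Complex

/-- Theorem 2 (optimal attacker set-points): over the half-disk
`D = {w : Re w ≥ 0, |w| ≤ s̄}`, the point `w* = -s̄·I` is the unique minimizer
of `w ↦ Re(conj(Z)·w)` when `Re Z > 0` and `Im Z > 0`, and the minimum value
is `-(Im Z)·s̄`. -/
theorem optimal_attacker_setpoint (sbar : ℝ) (hs : 0 < sbar)
    (Z : ℂ) (hR : 0 < Z.re) (hX : 0 < Z.im) :
    ((0:ℝ) ≤ (-(sbar : ℂ) * Complex.I).re ∧
        ‖-(sbar : ℂ) * Complex.I‖ ≤ sbar) ∧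
    ((starRingEnd ℂ) Z * (-(sbar : ℂ) * Complex.I)).re = -(Z.im * sbar) ∧
    (∀ w : ℂ, 0 ≤ w.re → ‖w‖ ≤ sbar →
      ((starRingEnd ℂ) Z * (-(sbar : ℂ) * Complex.I)).re ≤
        ((starRingEnd ℂ) Z * w).re) ∧
    (∀ w : ℂ, 0 ≤ w.re → ‖w‖ ≤ sbar →
      (((starRingEnd ℂ) Z * (-(sbar : ℂ) * Complex.I)).re =
          ((starRingEnd ℂ) Z * w).re ↔ w = -(sbar : ℂ) * Complex.I)) := by
  have hval : ((starRingEnd ℂ) Z * (-(sbar : ℂ) * Complex.I)).re = -(Z.im * sbar) := by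
    simp [Complex.mul_re]
  have key : ∀ w : ℂ, 0 ≤ w.re → ‖w‖ ≤ sbar →
      -(Z.im * sbar) ≤ ((starRingEnd ℂ) Z * w).re := by
    intro w hre habs
    have him : -sbar ≤ w.im := by
      have := Complex.abs_im_le_norm w
      have : |w.im| ≤ sbar := this.trans habs
      linarith [abs_le.mp this |>.1]
    have h1 : 0 ≤ Z.re * w.re := mul_nonneg hR.le hre
    have h2 : -(Z.im * sbar) ≤ Z.im * w.im := by nlinarith
    simp only [Complex.mul_re, Complex.conj_re, Complex.conj_im]
    nlinarith
  refine ⟨⟨by simp, by simp [abs_of_pos hs]⟩, hval, ?_, ?_⟩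
  · intro w hre habs; rw [hval]; exact key w hre habs
  · intro w hre habs
    constructor
    · intro heq
      rw [hval] at heq
      have him : -sbar ≤ w.im := by
        have h := (abs_le.mp ((Complex.abs_im_le_norm w).trans habs)).1
        linarith
      simp only [Complex.mul_re, Complex.conj_re, Complex.conj_im] at heq
      have hre0 : w.re = 0 := by nlinarith
      have him0 : w.im = -sbar := by nlinarith
      apply Complex.ext <;> simp [hre0, him0]
    · intro h; rw [h]
end

section
/- Let s̄ > 0 and let Z = R + X·i with R > 0 and X > 0. Let D = {w ∈ ℂ : Re w ≥ 0 and |w| ≤ s̄} and let w* = s̄·Z/|Z|. Then w* ∈ D, Re(conj(Z)·w*) = s̄·|Z| = s̄·√(R² + X²), for every w ∈ D one has Re(conj(Z)·w) ≤ Re(conj(Z)·w*), equality holds if and only if w = w*, and the argument of w* equals arctan(X/R). -/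
open Complex

/-- Proposition 2 (identical r/x ratio case): over the half-disk
`D = {w : Re w ≥ 0, |w| ≤ s̄}`, the point `w* = s̄·Z/|Z|` with `Z = R + X·I`
(`R, X > 0`) is the unique maximizer of `w ↦ Re(conj(Z)·w)`, the maximum value
is `s̄·|Z| = s̄·√(R²+X²)`, and `arg w* = arctan(X/R)`. -/
theorem optimal_defender_setpoint (sbar R X : ℝ)
    (hs : 0 < sbar) (hR : 0 < R) (hX : 0 < X)
    (Z : ℂ) (hZ : Z = (R : ℂ) + (X : ℂ) * Complex.I) :
    ((0:ℝ) ≤ ((sbar : ℂ) * Z / (‖Z‖ : ℂ)).re ∧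
        ‖(sbar : ℂ) * Z / (‖Z‖ : ℂ)‖ ≤ sbar) ∧
    ((starRingEnd ℂ) Z * ((sbar : ℂ) * Z / (‖Z‖ : ℂ))).re =
        sbar * ‖Z‖ ∧
    sbar * ‖Z‖ = sbar * Real.sqrt (R ^ 2 + X ^ 2) ∧
    (∀ w : ℂ, 0 ≤ w.re → ‖w‖ ≤ sbar →
      ((starRingEnd ℂ) Z * w).re ≤
        ((starRingEnd ℂ) Z * ((sbar : ℂ) * Z / (‖Z‖ : ℂ))).re) ∧
    (∀ w : ℂ, 0 ≤ w.re → ‖w‖ ≤ sbar →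
      (((starRingEnd ℂ) Z * w).re =
          ((starRingEnd ℂ) Z * ((sbar : ℂ) * Z / (‖Z‖ : ℂ))).re ↔
        w = (sbar : ℂ) * Z / (‖Z‖ : ℂ))) ∧
    Complex.arg ((sbar : ℂ) * Z / (‖Z‖ : ℂ)) = Real.arctan (X / R) := by
  have hZre : Z.re = R := by rw [hZ]; simp
  have hZim : Z.im = X := by rw [hZ]; simp
  have hZne : Z ≠ 0 := by
    intro h; rw [h] at hZre; simp at hZre; exact hR.ne' hZre.symm
  have habs : 0 < ‖Z‖ := norm_pos_iff.mpr hZne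
  have habsne : (‖Z‖ : ℂ) ≠ 0 := by exact_mod_cast habs.ne'
  set wstar : ℂ := (sbar : ℂ) * Z / (‖Z‖ : ℂ) with hws
  have hconjZ : (starRingEnd ℂ) Z * Z = ((‖Z‖ : ℝ) ^ 2 : ℝ) := by
    rw [mul_comm, Complex.mul_conj, Complex.normSq_eq_norm_sq]
  have hkey : (starRingEnd ℂ) Z * wstar = ((sbar * ‖Z‖ : ℝ) : ℂ) := by
    rw [hws, mul_div_assoc', mul_comm ((sbar:ℂ)) Z, ← mul_assoc, hconjZ]
    push_cast
    field_simp
  have hmax : ((starRingEnd ℂ) Z * wstar).re = sbar * ‖Z‖ := by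
    rw [hkey]; simp
  have habsws : ‖wstar‖ = sbar := by
    rw [hws]
    rw [norm_div, norm_mul]
    simp [Complex.norm_real, abs_of_pos hs, abs_of_pos habs]
    field_simp
  have hws2 : wstar = ((sbar / ‖Z‖ : ℝ) : ℂ) * Z := by
    rw [hws]; push_cast; field_simp
  refine ⟨⟨?_, ?_⟩, hmax, ?_, ?_, ?_, ?_⟩
  · rw [hws2, Complex.re_ofReal_mul, hZre]
    positivity
  · rw [habsws]
  · congr 1
    rw [Complex.norm_def, Complex.normSq_apply, hZre, hZim]; ring_nf
  · intro w hwre hwabs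
    rw [hmax]
    calc ((starRingEnd ℂ) Z * w).re ≤ ‖(starRingEnd ℂ) Z * w‖ :=
          Complex.re_le_norm _
      _ = ‖Z‖ * ‖w‖ := by rw [norm_mul, Complex.norm_conj]
      _ ≤ ‖Z‖ * sbar := by
          exact mul_le_mul_of_nonneg_left hwabs habs.le
      _ = sbar * ‖Z‖ := mul_comm _ _
  · intro w hwre hwabs
    constructor
    · intro heq
      rw [hmax] at heq
      have h1 : ((starRingEnd ℂ) Z * w).re ≤ ‖(starRingEnd ℂ) Z * w‖ :=
        Complex.re_le_norm _
      have h2 : ‖(starRingEnd ℂ) Z * w‖ = ‖Z‖ * ‖w‖ := by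
        rw [norm_mul, Complex.norm_conj]
      have h3 : ‖Z‖ * ‖w‖ ≤ ‖Z‖ * sbar :=
        mul_le_mul_of_nonneg_left hwabs habs.le
      have heq2 : ‖(starRingEnd ℂ) Z * w‖ = sbar * ‖Z‖ := by
        rw [h2] at h1 ⊢
        nlinarith [h1, h3, heq]
      have heqre : ((starRingEnd ℂ) Z * w).re = ‖(starRingEnd ℂ) Z * w‖ := by
        rw [heq2, heq]
      have hreal : (starRingEnd ℂ) Z * w = ((‖(starRingEnd ℂ) Z * w‖ : ℝ) : ℂ) := by
        have := Complex.re_eq_norm.mp heqre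
        have habsre : ‖(starRingEnd ℂ) Z * w‖ = ((starRingEnd ℂ) Z * w).re :=
          heqre.symm
        apply Complex.ext
        · simpa using heqre
        · simpa using ((Complex.le_def.mp this).2).symm
      have : (starRingEnd ℂ) Z * w = ((sbar * ‖Z‖ : ℝ) : ℂ) := by
        rw [hreal, heq2]
      have hfin : (starRingEnd ℂ) Z * w = (starRingEnd ℂ) Z * wstar := by
        rw [this, hkey]
      exact mul_left_cancel₀ (by simpa using hZne) hfin
    · intro h; rw [h]
  · have : wstar = ((sbar / ‖Z‖ : ℝ) : ℂ) * Z := by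
      rw [hws]; push_cast; field_simp
    rw [this, Complex.arg_real_mul _ (by positivity)]
    have hargtan : Real.tan (Complex.arg Z) = X / R := by
      rw [Complex.tan_arg, hZre, hZim]
    rw [← hargtan, Real.arctan_tan]
    · have := Complex.abs_arg_lt_pi_div_two_iff.mpr (Or.inl (hZre ▸ hR))
      linarith [abs_lt.mp this |>.1]
    · have := Complex.abs_arg_lt_pi_div_two_iff.mpr (Or.inl (hZre ▸ hR))
      exact (abs_lt.mp this).2
end

section
/- Let V be a finite rooted tree (as in the context) in which every non-root node l carries an impedance z l ∈ ℂ with Re(z l) > 0 and Im(z l) > 0, and define the common path impedances Z(j,k) = ∑_{l ∈ P(j) ∩ P(k)} z l. Let i, j, k ∈ V be such that P(i) ∩ P(j) ⊊ P(i) ∩ P(k) (node j strictly precedes node k relative to the pivot node i). Let s̄ > 0 and sp ∈ ℂ with Re sp ≥ 0, |sp| ≤ s̄, and sp ≠ −s̄·i. Then 2·Re(conj(Z(i,j))·(sp + s̄·i)) < 2·Re(conj(Z(i,k))·(sp + s̄·i)). -/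
/-- A finite rooted tree: a distinguished root and a parent map under which
every node reaches the root, the root is its own parent, and no other node
is its own parent. -/
structure FiniteRootedTree (V : Type*) where
  root : V
  parent : V → V
  parent_root : parent root = root
  parent_ne : ∀ v, v ≠ root → parent v ≠ v
  reaches_root : ∀ v, ∃ n : ℕ, parent^[n] v = root

namespace FiniteRootedTree

variable {V : Type*} [Fintype V] [DecidableEq V]

/-- The children of a node `j`. -/
def children (T : FiniteRootedTree V) (j : V) : Finset V :=
  Finset.univ.filter fun k => k ≠ T.root ∧ T.parent k = j

open Classical in
/-- The subtree `Λ(j)` rooted at `j` (the descendants of `j`, including `j`). -/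
noncomputable def subtree (T : FiniteRootedTree V) (j : V) : Finset V :=
  Finset.univ.filter fun k => ∃ n : ℕ, T.parent^[n] k = j

open Classical in
/-- The path set `P(j)`: the ancestors of `j`, excluding the root and
including `j` itself. -/
noncomputable def pathSet (T : FiniteRootedTree V) (j : V) : Finset V :=
  Finset.univ.filter fun k => k ≠ T.root ∧ ∃ n : ℕ, T.parent^[n] j = k

/-- The depth `d(j)`: the least `n` with `parent^[n] j = root`. -/
noncomputable def depth (T : FiniteRootedTree V) (j : V) : ℕ :=
  Nat.find (T.reaches_root j)

/-- The height `H` of the tree: the maximum depth over all nodes. -/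
noncomputable def height (T : FiniteRootedTree V) : ℕ :=
  Finset.univ.sup fun v => T.depth v

end FiniteRootedTree

open FiniteRootedTree

/-- Proposition 4: for homogeneous DERs with pre-attack set-point `sp` and
apparent power capability `s̄`, if node `j` strictly precedes node `k`
relative to the pivot node `i` (i.e. `P(i) ∩ P(j) ⊊ P(i) ∩ P(k)`), then the
LPF voltage drop `Δ_j(ν̂_i) = 2·Re(conj(Z(i,j))·(sp + s̄·I))` caused by
compromising the DER at `j` is strictly smaller than the one caused by
compromising the DER at `k`. -/
theorem compromise_downstream_worse {V : Type*} [Fintype V] [DecidableEq V]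
    (T : FiniteRootedTree V) (z : V → ℂ)
    (hz : ∀ l, l ≠ T.root → 0 < (z l).re ∧ 0 < (z l).im)
    (i j k : V)
    (hjk : T.pathSet i ∩ T.pathSet j ⊂ T.pathSet i ∩ T.pathSet k)
    (sbar : ℝ) (hsbar : 0 < sbar) (sp : ℂ)
    (hsp_re : 0 ≤ sp.re) (hsp_abs : ‖sp‖ ≤ sbar)
    (hsp_ne : sp ≠ -(sbar : ℂ) * Complex.I) :
    2 * ((starRingEnd ℂ) (∑ l ∈ T.pathSet i ∩ T.pathSet j, z l) *
          (sp + (sbar : ℂ) * Complex.I)).re <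
      2 * ((starRingEnd ℂ) (∑ l ∈ T.pathSet i ∩ T.pathSet k, z l) *
          (sp + (sbar : ℂ) * Complex.I)).re := by
  set w : ℂ := sp + (sbar : ℂ) * Complex.I with hw
  have hwre : 0 ≤ w.re := by simp [hw, hsp_re]
  have hwim : 0 < w.im := by
    have him : sp.im + sbar ≠ 0 := by
      intro h
      have him' : sp.im = -sbar := by linarith
      have h1 : sp.re ^ 2 + sp.im ^ 2 ≤ sbar ^ 2 := by
        have := Complex.sq_norm sp
        nlinarith [Complex.sq_norm sp, Complex.normSq_apply sp,
          sq_nonneg (‖sp‖ - sbar), norm_nonneg sp]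
      have hre0 : sp.re = 0 := by nlinarith [sq_nonneg sp.re]
      apply hsp_ne
      apply Complex.ext <;> simp [hre0, him']
    have h2 : 0 ≤ sp.im + sbar := by
      have := Complex.abs_im_le_norm sp
      have := abs_le.mp (le_trans this hsp_abs)
      linarith [this.1]
    have : 0 < sp.im + sbar := lt_of_le_of_ne h2 (Ne.symm him)
    simpa [hw] using this
  have hkey : ∀ A : Finset V,
      ((starRingEnd ℂ) (∑ l ∈ A, z l) * w).re
        = ∑ l ∈ A, ((starRingEnd ℂ) (z l) * w).re := by
    intro A
    rw [map_sum, Finset.sum_mul, Complex.re_sum]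
  rw [hkey, hkey]
  have hsub := hjk.subset
  have hpos : ∀ l ∈ T.pathSet i ∩ T.pathSet k, l ∉ T.pathSet i ∩ T.pathSet j →
      0 < ((starRingEnd ℂ) (z l) * w).re := by
    intro l hl _
    have hlr : l ≠ T.root := by
      have h1 := (Finset.mem_inter.mp hl).1
      simp only [FiniteRootedTree.pathSet, Finset.mem_filter] at h1
      exact h1.2.1
    obtain ⟨hre, him⟩ := hz l hlr
    have : ((starRingEnd ℂ) (z l) * w).re = (z l).re * w.re + (z l).im * w.im := by
      simp [Complex.mul_re]
    rw [this]
    have h1 : 0 ≤ (z l).re * w.re := mul_nonneg hre.le hwre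
    nlinarith
  obtain ⟨x, hxB, hxA⟩ := Finset.exists_of_ssubset hjk
  have := Finset.sum_lt_sum_of_subset hsub hxB hxA (hpos x hxB hxA)
    (fun l hl hl' => (hpos l hl hl').le)
  linarith
end

section
/- Let V be a finite rooted tree (as in the context), z : V → ℂ, ν₀ ∈ ℝ, and s : V → ℂ. Let Ŝ : V → ℂ satisfy Ŝ j = (∑_{k ∈ ch(j)} Ŝ k) + s j for every j ≠ r, and let ν̂ : V → ℝ satisfy ν̂ r = ν₀ and ν̂ j = ν̂(p j) − 2·Re(conj(z j)·Ŝ j) for every j ≠ r. Define Z(j,k) = ∑_{l ∈ P(j) ∩ P(k)} z l. Then for every j ∈ V, ν̂ j = ν₀ − 2·∑_{k ∈ V, k ≠ r} Re(conj(Z(j,k))·s k). -/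
open FiniteRootedTree

set_option linter.unusedSectionVars false
namespace FiniteRootedTree

variable {V : Type*} [Fintype V] [DecidableEq V] (T : FiniteRootedTree V)

lemma iterate_root (n : ℕ) : T.parent^[n] T.root = T.root :=
  Function.iterate_fixed T.parent_root n

lemma acyclic {v : V} {n : ℕ} (h : T.parent^[n] v = v) (hv : v ≠ T.root) : n = 0 := by
  by_contra hn
  obtain ⟨d, hd⟩ := T.reaches_root v
  have hmul : ∀ k : ℕ, T.parent^[k * n] v = v := by
    intro k
    induction k with
    | zero => simp
    | succ k ih =>
      rw [Nat.succ_mul, Function.iterate_add_apply, h, ih]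
  have hge : d ≤ d * n := Nat.le_mul_of_pos_right d (Nat.pos_of_ne_zero hn)
  have : T.parent^[d * n] v = T.root := by
    rw [← Nat.sub_add_cancel hge, Function.iterate_add_apply, hd, T.iterate_root]
  exact hv ((hmul d).symm.trans this)

lemma mem_subtree {j k : V} : k ∈ T.subtree j ↔ ∃ n : ℕ, T.parent^[n] k = j := by
  simp [subtree]

lemma mem_pathSet {j k : V} :
    k ∈ T.pathSet j ↔ k ≠ T.root ∧ ∃ n : ℕ, T.parent^[n] j = k := by
  simp [pathSet]

lemma pathSet_root : T.pathSet T.root = ∅ := by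
  ext k
  simp only [mem_pathSet, Finset.notMem_empty, iff_false, not_and]
  rintro hk ⟨n, hn⟩
  rw [T.iterate_root] at hn
  exact hk hn.symm

lemma not_mem_pathSet_parent {j : V} (hj : j ≠ T.root) : j ∉ T.pathSet (T.parent j) := by
  rw [mem_pathSet]
  rintro ⟨-, n, hn⟩
  have : T.parent^[n + 1] j = j := by rw [Function.iterate_succ_apply, hn]
  exact Nat.succ_ne_zero n (T.acyclic this hj)

lemma pathSet_eq_insert {j : V} (hj : j ≠ T.root) :
    T.pathSet j = insert j (T.pathSet (T.parent j)) := by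
  ext l
  simp only [mem_pathSet, Finset.mem_insert]
  constructor
  · rintro ⟨hl, n, hn⟩
    cases n with
    | zero => exact Or.inl hn.symm
    | succ n => exact Or.inr ⟨hl, n, by rwa [Function.iterate_succ_apply] at hn⟩
  · rintro (rfl | ⟨hl, n, hn⟩)
    · exact ⟨hj, 0, rfl⟩
    · exact ⟨hl, n + 1, by rwa [Function.iterate_succ_apply]⟩

lemma depth_parent_lt {j : V} (hj : j ≠ T.root) : T.depth (T.parent j) < T.depth j := by
  have hdj : T.parent^[T.depth j] j = T.root := Nat.find_spec (T.reaches_root j)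
  have hpos : 0 < T.depth j := by
    rcases Nat.eq_zero_or_pos (T.depth j) with h | h
    · exact absurd (by simpa [h] using hdj) hj
    · exact h
  have : T.parent^[T.depth j - 1] (T.parent j) = T.root := by
    rw [← Function.iterate_succ_apply, Nat.succ_eq_add_one, Nat.sub_add_cancel hpos]
    exact hdj
  calc T.depth (T.parent j) ≤ T.depth j - 1 := Nat.find_le this
    _ < T.depth j := Nat.sub_lt hpos one_pos

lemma subtree_root_ne {l k : V} (hl : l ≠ T.root) (hk : k ∈ T.subtree l) : k ≠ T.root := by
  rintro rfl
  obtain ⟨n, hn⟩ := T.mem_subtree.mp hk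
  exact hl ((T.iterate_root n ▸ hn).symm)

lemma mem_subtree_iff_pathSet {l k : V} (hl : l ≠ T.root) :
    k ∈ T.subtree l ↔ (k ≠ T.root ∧ l ∈ T.pathSet k) := by
  constructor
  · intro h
    obtain ⟨n, hn⟩ := T.mem_subtree.mp h
    exact ⟨T.subtree_root_ne hl h, T.mem_pathSet.mpr ⟨hl, n, hn⟩⟩
  · rintro ⟨-, h⟩
    obtain ⟨-, n, hn⟩ := T.mem_pathSet.mp h
    exact T.mem_subtree.mpr ⟨n, hn⟩

lemma subtree_decomp {j : V} (hj : j ≠ T.root) :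
    T.subtree j = insert j ((T.children j).biUnion fun k => T.subtree k) := by
  ext x
  simp only [Finset.mem_insert, Finset.mem_biUnion, mem_subtree, children,
    Finset.mem_filter, Finset.mem_univ, true_and]
  constructor
  · rintro ⟨n, hn⟩
    cases n with
    | zero => exact Or.inl (by simpa using hn)
    | succ n =>
      rw [Function.iterate_succ_apply'] at hn
      refine Or.inr ⟨T.parent^[n] x, ⟨?_, hn⟩, n, rfl⟩
      rintro hroot
      rw [hroot, T.parent_root] at hn
      exact hj hn.symm
  · rintro (rfl | ⟨k, ⟨-, hk⟩, n, hn⟩)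
    · exact ⟨0, rfl⟩
    · exact ⟨n + 1, by rw [Function.iterate_succ_apply', hn, hk]⟩

lemma not_mem_subtree_child {j k : V} (hj : j ≠ T.root) (hk : k ∈ T.children j) :
    j ∉ T.subtree k := by
  intro h
  obtain ⟨n, hn⟩ := T.mem_subtree.mp h
  obtain ⟨-, hpk⟩ := (Finset.mem_filter.mp hk).2
  have : T.parent^[n + 1] j = j := by rw [Function.iterate_succ_apply', hn, hpk]
  exact Nat.succ_ne_zero n (T.acyclic this hj)

lemma children_subtrees_disjoint {j : V} {k k' : V} (hk : k ∈ T.children j)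
    (hk' : k' ∈ T.children j) (hne : k ≠ k') : Disjoint (T.subtree k) (T.subtree k') := by
  obtain ⟨hkr, hpk⟩ := (Finset.mem_filter.mp hk).2
  obtain ⟨hkr', hpk'⟩ := (Finset.mem_filter.mp hk').2
  rw [Finset.disjoint_left]
  intro x hx hx'
  obtain ⟨n, hn⟩ := T.mem_subtree.mp hx
  obtain ⟨m, hm⟩ := T.mem_subtree.mp hx'
  -- WLOG style: handle both orders
  have key : ∀ a b : V, a ≠ T.root → b ≠ T.root → T.parent a = j → T.parent b = j →
      a ≠ b → ∀ p q : ℕ, T.parent^[p] x = a → T.parent^[q] x = b → p ≤ q → False := by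
    intro a b har hbr hpa hpb hab p q hp hq hpq
    have hb : T.parent^[q - p] a = b := by
      rw [← hp, ← Function.iterate_add_apply, Nat.sub_add_cancel hpq, hq]
    rcases Nat.eq_zero_or_pos (q - p) with h0 | h0
    · exact hab (by simpa [h0] using hb)
    · have hb' : T.parent^[q - p - 1] j = b := by
        rw [← hpa, ← Function.iterate_succ_apply, Nat.succ_eq_add_one,
          Nat.sub_add_cancel h0]
        exact hb
      by_cases hjr : j = T.root
      · exact hbr (by rw [← hb', hjr, T.iterate_root])
      · have : T.parent^[q - p] j = j := by
          rw [← Nat.sub_add_cancel h0, Function.iterate_succ_apply', hb', hpb]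
        exact h0.ne' (T.acyclic this hjr)
  rcases le_total n m with h | h
  · exact key k k' hkr hkr' hpk hpk' hne n m hn hm h
  · exact key k' k hkr' hkr hpk' hpk hne.symm m n hm hn h

lemma subtree_child_card_lt {j k : V} (hj : j ≠ T.root) (hk : k ∈ T.children j) :
    (T.subtree k).card < (T.subtree j).card := by
  apply Finset.card_lt_card
  constructor
  · intro x hx
    obtain ⟨n, hn⟩ := T.mem_subtree.mp hx
    obtain ⟨-, hpk⟩ := (Finset.mem_filter.mp hk).2
    exact T.mem_subtree.mpr ⟨n + 1, by rw [Function.iterate_succ_apply', hn, hpk]⟩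
  · intro hsub
    exact T.not_mem_subtree_child hj hk
      (hsub (T.mem_subtree.mpr ⟨0, rfl⟩))

end FiniteRootedTree

/-- Lemma 1 (equation (10c)): under the LPF model, the squared nodal voltage
has the closed form `ν̂ j = ν₀ − 2·∑_{k ≠ r} Re(conj(Z(j,k))·s k)`, where
`Z(j,k) = ∑_{l ∈ P(j) ∩ P(k)} z l` is the common path impedance. -/
theorem lpf_voltage_closed_form {V : Type*} [Fintype V] [DecidableEq V]
    (T : FiniteRootedTree V) (z : V → ℂ) (ν₀ : ℝ) (s : V → ℂ)
    (Shat : V → ℂ)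
    (hS : ∀ j, j ≠ T.root → Shat j = (∑ k ∈ T.children j, Shat k) + s j)
    (nuhat : V → ℝ) (hroot : nuhat T.root = ν₀)
    (hrec : ∀ j, j ≠ T.root →
      nuhat j = nuhat (T.parent j) - 2 * ((starRingEnd ℂ) (z j) * Shat j).re) :
    ∀ j, nuhat j = ν₀ - 2 * ∑ k ∈ Finset.univ.filter (fun k => k ≠ T.root),
      ((starRingEnd ℂ) (∑ l ∈ T.pathSet j ∩ T.pathSet k, z l) * s k).re := by
  -- Step 1: Shat l = sum of s over the subtree of l, for l ≠ root.
  have hShat : ∀ l, l ≠ T.root → Shat l = ∑ k ∈ T.subtree l, s k := by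
    have key : ∀ n : ℕ, ∀ l, (T.subtree l).card ≤ n → l ≠ T.root →
        Shat l = ∑ k ∈ T.subtree l, s k := by
      intro n
      induction n with
      | zero =>
        intro l hcard hl
        have : l ∈ T.subtree l := T.mem_subtree.mpr ⟨0, rfl⟩
        have := Finset.card_pos.mpr ⟨l, this⟩
        omega
      | succ n ih =>
        intro l hcard hl
        rw [T.subtree_decomp hl, Finset.sum_insert, Finset.sum_biUnion]
        · rw [hS l hl]
          rw [add_comm]
          congr 1
          apply Finset.sum_congr rfl
          intro k hk
          have hkr : k ≠ T.root := (Finset.mem_filter.mp hk).2.1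
          apply ih k _ hkr
          have := T.subtree_child_card_lt hl hk
          omega
        · intro k hk k' hk' hne
          exact T.children_subtrees_disjoint hk hk' hne
        · simp only [Finset.mem_biUnion, not_exists]
          intro k
          rintro ⟨hk, hmem⟩
          exact T.not_mem_subtree_child hl hk hmem
    exact fun l hl => key (T.subtree l).card l le_rfl hl
  -- Step 2: nuhat j = ν₀ - 2 * ∑_{l ∈ pathSet j} Re(conj(z l) * Shat l), by induction on depth.
  have hnu : ∀ j, nuhat j = ν₀ -
      2 * ∑ l ∈ T.pathSet j, ((starRingEnd ℂ) (z l) * Shat l).re := by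
    have key : ∀ n : ℕ, ∀ j, T.depth j ≤ n →
        nuhat j = ν₀ - 2 * ∑ l ∈ T.pathSet j, ((starRingEnd ℂ) (z l) * Shat l).re := by
      intro n
      induction n with
      | zero =>
        intro j hd
        have hdj : T.parent^[T.depth j] j = T.root := Nat.find_spec (T.reaches_root j)
        have hj : j = T.root := by
          have : T.depth j = 0 := Nat.le_zero.mp hd
          simpa [this] using hdj
        rw [hj, hroot, T.pathSet_root]
        simp
      | succ n ih =>
        intro j hd
        by_cases hj : j = T.root
        · rw [hj, hroot, T.pathSet_root]; simp
        · have hplt := T.depth_parent_lt hj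
          rw [hrec j hj, ih (T.parent j) (by omega), T.pathSet_eq_insert hj,
            Finset.sum_insert (T.not_mem_pathSet_parent hj)]
          ring
    exact fun j => key (T.depth j) j le_rfl
  -- Step 3: combine.
  intro j
  rw [hnu j]
  congr 1
  congr 1
  -- rewrite Shat and expand
  have lhs_eq : ∑ l ∈ T.pathSet j, ((starRingEnd ℂ) (z l) * Shat l).re =
      ∑ l ∈ T.pathSet j, ∑ k ∈ T.subtree l, ((starRingEnd ℂ) (z l) * s k).re := by
    apply Finset.sum_congr rfl
    intro l hl
    rw [hShat l (T.mem_pathSet.mp hl).1, Finset.mul_sum, Complex.re_sum]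
  rw [lhs_eq]
  have rhs_eq : ∀ k : V,
      ((starRingEnd ℂ) (∑ l ∈ T.pathSet j ∩ T.pathSet k, z l) * s k).re =
      ∑ l ∈ T.pathSet j ∩ T.pathSet k, ((starRingEnd ℂ) (z l) * s k).re := by
    intro k
    rw [map_sum, Finset.sum_mul, Complex.re_sum]
  simp only [rhs_eq]
  -- Now swap the double sums.
  have subtree_eq : ∀ l ∈ T.pathSet j, T.subtree l =
      (Finset.univ.filter fun k => k ≠ T.root).filter fun k => l ∈ T.pathSet k := by
    intro l hl
    have hlr : l ≠ T.root := (T.mem_pathSet.mp hl).1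
    ext k
    simp only [Finset.mem_filter, Finset.mem_univ, true_and]
    rw [T.mem_subtree_iff_pathSet hlr]
  calc ∑ l ∈ T.pathSet j, ∑ k ∈ T.subtree l, ((starRingEnd ℂ) (z l) * s k).re
      = ∑ l ∈ T.pathSet j, ∑ k ∈ Finset.univ.filter (fun k => k ≠ T.root),
          if l ∈ T.pathSet k then ((starRingEnd ℂ) (z l) * s k).re else 0 := by
        apply Finset.sum_congr rfl
        intro l hl
        rw [subtree_eq l hl, Finset.sum_filter]
    _ = ∑ k ∈ Finset.univ.filter (fun k => k ≠ T.root), ∑ l ∈ T.pathSet j,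
          if l ∈ T.pathSet k then ((starRingEnd ℂ) (z l) * s k).re else 0 :=
        Finset.sum_comm
    _ = ∑ k ∈ Finset.univ.filter (fun k => k ≠ T.root),
          ∑ l ∈ T.pathSet j ∩ T.pathSet k, ((starRingEnd ℂ) (z l) * s k).re := by
        apply Finset.sum_congr rfl
        intro k _
        rw [← Finset.sum_filter, Finset.filter_mem_eq_inter]
end

section
/- Let V be a finite rooted tree (as in the context) and ν₀ ∈ ℝ. For every j ≠ r let r_j ≥ 0, x_j ≥ 0, ℓ_j ≥ 0 and let P_j, Q_j, P̌_j, Q̌_j be real numbers with P_j ≤ P̌_j and Q_j ≤ Q̌_j. Let ν, ν̌ : V → ℝ satisfy ν r = ν̌ r = ν₀ and, for every j ≠ r, ν j = ν(p j) − 2·(r_j·P_j + x_j·Q_j) + (r_j² + x_j²)·ℓ_j and ν̌ j = ν̌(p j) − 2·(r_j·P̌_j + x_j·Q̌_j). Then ν j ≥ ν̌ j for every j ∈ V. -/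
open FiniteRootedTree

/-- Voltage-comparison half of Proposition 1: if the nonlinear-model line
flows `(P, Q)` are dominated componentwise by the ε-LPF flows `(P̌, Q̌)`, the
resistances, reactances and squared current magnitudes are nonnegative, then
the nonlinear squared voltages `ν` (which include the loss term
`(r² + x²)·ℓ`) dominate the ε-LPF squared voltages `ν̌`. -/
theorem npf_voltage_ge_epsLPF {V : Type*} [Fintype V] [DecidableEq V]
    (T : FiniteRootedTree V) (ν₀ : ℝ)
    (r x ℓ P Q Pc Qc : V → ℝ)
    (hr : ∀ j, j ≠ T.root → 0 ≤ r j)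
    (hx : ∀ j, j ≠ T.root → 0 ≤ x j)
    (hℓ : ∀ j, j ≠ T.root → 0 ≤ ℓ j)
    (hP : ∀ j, j ≠ T.root → P j ≤ Pc j)
    (hQ : ∀ j, j ≠ T.root → Q j ≤ Qc j)
    (ν νc : V → ℝ)
    (hνroot : ν T.root = ν₀) (hνcroot : νc T.root = ν₀)
    (hνrec : ∀ j, j ≠ T.root →
      ν j = ν (T.parent j) - 2 * (r j * P j + x j * Q j) + (r j ^ 2 + x j ^ 2) * ℓ j)
    (hνcrec : ∀ j, j ≠ T.root →
      νc j = νc (T.parent j) - 2 * (r j * Pc j + x j * Qc j)) :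
    ∀ j, νc j ≤ ν j := by
  have hdep : ∀ j, j ≠ T.root → T.depth (T.parent j) < T.depth j := by
    intro j hj
    have h0 : T.parent^[T.depth j] j = T.root := Nat.find_spec (T.reaches_root j)
    have hpos : 0 < T.depth j := by
      rcases Nat.eq_zero_or_pos (T.depth j) with h | h
      · exfalso; apply hj; simpa [h] using h0
      · exact h
    have : T.parent^[T.depth j - 1] (T.parent j) = T.root := by
      rw [← Function.iterate_succ_apply, Nat.succ_eq_add_one, Nat.sub_add_cancel hpos]
      exact h0
    have h3 : T.depth (T.parent j) ≤ T.depth j - 1 := Nat.find_le this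
    omega
  suffices main : ∀ n j, T.depth j = n → νc j ≤ ν j by
    intro j; exact main _ j rfl
  intro n
  induction n using Nat.strong_induction_on with
  | _ n ih =>
    intro j hn
    by_cases hj : j = T.root
    · subst hj; rw [hνroot, hνcroot]
    · have hpar : νc (T.parent j) ≤ ν (T.parent j) := by
        apply ih (T.depth (T.parent j)) _ _ rfl
        rw [← hn]; exact hdep j hj
      rw [hνrec j hj, hνcrec j hj]
      have h1 : r j * P j + x j * Q j ≤ r j * Pc j + x j * Qc j :=
        add_le_add (mul_le_mul_of_nonneg_left (hP j hj) (hr j hj))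
          (mul_le_mul_of_nonneg_left (hQ j hj) (hx j hj))
      have h2 : 0 ≤ (r j ^ 2 + x j ^ 2) * ℓ j :=
        mul_nonneg (by positivity) (hℓ j hj)
      nlinarith
end

section
/- Let Ψ and I be nonempty finite types, v̂ : Ψ → I → ℝ, and let ν₀, ν̲ ∈ ℝ, W > 0, ε > 0. Define v̌ : Ψ → I → ℝ by v̌ ψ i = ν₀ + (1+ε)·(v̂ ψ i − ν₀), and define L̂ ψ = max_{i ∈ I} W·max(ν̲ − v̂ ψ i, 0) and Ľ ψ = max_{i ∈ I} W·max(ν̲ − v̌ ψ i, 0). If max_{ψ ∈ Ψ} L̂ ψ > 0 and max_{ψ ∈ Ψ} Ľ ψ > 0, then {ψ ∈ Ψ : L̂ ψ = max_{ψ'} L̂ ψ'} = {ψ ∈ Ψ : Ľ ψ = max_{ψ'} Ľ ψ'}. -/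
private lemma sup_affine_max {I : Type*} [Fintype I] [Nonempty I]
    (v : I → ℝ) (c a : ℝ) (hc : 0 ≤ c) :
    Finset.univ.sup' Finset.univ_nonempty (fun i => c * max (a - v i) 0)
      = c * max (a - Finset.univ.inf' Finset.univ_nonempty v) 0 := by
  apply le_antisymm
  · apply Finset.sup'_le
    intro i _
    have h1 : Finset.univ.inf' Finset.univ_nonempty v ≤ v i :=
      Finset.inf'_le _ (Finset.mem_univ i)
    have : max (a - v i) 0 ≤ max (a - Finset.univ.inf' Finset.univ_nonempty v) 0 :=
      max_le_max (by linarith) le_rfl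
    exact mul_le_mul_of_nonneg_left this hc
  · obtain ⟨i, _, hi⟩ := Finset.exists_mem_eq_inf' Finset.univ_nonempty v
    rw [hi]
    exact Finset.le_sup' (fun i => c * max (a - v i) 0) (Finset.mem_univ i)

private lemma key_set {Ψ : Type*} [Fintype Ψ] [Nonempty Ψ]
    (m : Ψ → ℝ) (c a : ℝ) (hc : 0 < c) (L : Ψ → ℝ)
    (hL : ∀ ψ, L ψ = c * max (a - m ψ) 0)
    (hpos : 0 < Finset.univ.sup' Finset.univ_nonempty L) :
    {ψ : Ψ | L ψ = Finset.univ.sup' Finset.univ_nonempty L}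
      = {ψ : Ψ | m ψ = Finset.univ.inf' Finset.univ_nonempty m} := by
  have hsup : Finset.univ.sup' Finset.univ_nonempty L
      = c * max (a - Finset.univ.inf' Finset.univ_nonempty m) 0 := by
    calc Finset.univ.sup' Finset.univ_nonempty L
        = Finset.univ.sup' Finset.univ_nonempty (fun ψ => c * max (a - m ψ) 0) := by
          apply Finset.sup'_congr _ rfl; intro ψ _; exact hL ψ
      _ = c * max (a - Finset.univ.inf' Finset.univ_nonempty m) 0 :=
          sup_affine_max m c a hc.le
  set m₀ := Finset.univ.inf' Finset.univ_nonempty m with hm₀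
  have hmaxpos : 0 < max (a - m₀) 0 := by
    rw [hsup] at hpos
    by_contra h
    push_neg at h
    have : max (a - m₀) 0 = 0 := le_antisymm h (le_max_right _ _)
    rw [this, mul_zero] at hpos
    exact lt_irrefl 0 hpos
  have ham₀ : 0 < a - m₀ := by
    rcases lt_max_iff.mp hmaxpos with h | h
    · exact h
    · exact absurd h (lt_irrefl 0)
  have hmax₀ : max (a - m₀) 0 = a - m₀ := max_eq_left ham₀.le
  ext ψ
  simp only [Set.mem_setOf_eq]
  constructor
  · intro hψ
    rw [hL ψ, hsup] at hψ
    have heq : max (a - m ψ) 0 = max (a - m₀) 0 := mul_left_cancel₀ hc.ne' hψ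
    have hampos : 0 < a - m ψ := by
      rcases lt_max_iff.mp (heq ▸ hmaxpos) with h | h
      · exact h
      · exact absurd h (lt_irrefl 0)
    rw [max_eq_left hampos.le, hmax₀] at heq
    linarith
  · intro hψ
    rw [hL ψ, hsup, hψ]

/-- Proposition 5 part 2 (uniform bound `ν̲` and weight `W`): when the LPF and
ε-LPF squared voltages are related by `v̌ = ν₀ + (1+ε)·(v̂ − ν₀)` and both
optimal losses of voltage regulation are strictly positive, the sets of
optimal attack strategies of the two master-problems coincide. -/
theorem lpf_epsLPF_same_optimal_attacks
    (Ψ I : Type*) [Fintype Ψ] [Fintype I] [Nonempty Ψ] [Nonempty I]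
    (vhat : Ψ → I → ℝ) (ν₀ νlow W ε : ℝ) (hW : 0 < W) (hε : 0 < ε)
    (vcheck : Ψ → I → ℝ)
    (hvcheck : ∀ ψ i, vcheck ψ i = ν₀ + (1 + ε) * (vhat ψ i - ν₀))
    (Lhat Lcheck : Ψ → ℝ)
    (hLhat : ∀ ψ, Lhat ψ =
      Finset.univ.sup' Finset.univ_nonempty fun i => W * max (νlow - vhat ψ i) 0)
    (hLcheck : ∀ ψ, Lcheck ψ =
      Finset.univ.sup' Finset.univ_nonempty fun i => W * max (νlow - vcheck ψ i) 0)
    (hpos_hat : 0 < Finset.univ.sup' Finset.univ_nonempty Lhat)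
    (hpos_check : 0 < Finset.univ.sup' Finset.univ_nonempty Lcheck) :
    {ψ : Ψ | Lhat ψ = Finset.univ.sup' Finset.univ_nonempty Lhat} =
      {ψ : Ψ | Lcheck ψ = Finset.univ.sup' Finset.univ_nonempty Lcheck} := by
  have h1ε : (0:ℝ) < 1 + ε := by linarith
  set m : Ψ → ℝ := fun ψ => Finset.univ.inf' Finset.univ_nonempty (vhat ψ) with hm
  -- Lhat in canonical form
  have hLhat' : ∀ ψ, Lhat ψ = W * max (νlow - m ψ) 0 := fun ψ => by
    rw [hLhat ψ, sup_affine_max (vhat ψ) W νlow hW.le]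
  -- Lcheck in canonical form
  have hLcheck' : ∀ ψ, Lcheck ψ
      = (W * (1 + ε)) * max ((ν₀ + (νlow - ν₀) / (1 + ε)) - m ψ) 0 := fun ψ => by
    rw [hLcheck ψ]
    have hpt : ∀ i, W * max (νlow - vcheck ψ i) 0
        = (W * (1 + ε)) * max ((ν₀ + (νlow - ν₀) / (1 + ε)) - vhat ψ i) 0 := by
      intro i
      rw [hvcheck ψ i]
      have : νlow - (ν₀ + (1 + ε) * (vhat ψ i - ν₀))
          = (1 + ε) * ((ν₀ + (νlow - ν₀) / (1 + ε)) - vhat ψ i) := by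
        field_simp; ring
      have h2 : ∀ x : ℝ, max ((1 + ε) * x) 0 = (1 + ε) * max x 0 := fun x => by
        rw [mul_max_of_nonneg _ _ h1ε.le, mul_zero]
      rw [this, h2, ← mul_assoc]
    calc Finset.univ.sup' Finset.univ_nonempty (fun i => W * max (νlow - vcheck ψ i) 0)
        = Finset.univ.sup' Finset.univ_nonempty
            (fun i => (W * (1 + ε)) * max ((ν₀ + (νlow - ν₀) / (1 + ε)) - vhat ψ i) 0) := by
          apply Finset.sup'_congr _ rfl; intro i _; exact hpt i
      _ = (W * (1 + ε)) * max ((ν₀ + (νlow - ν₀) / (1 + ε)) - m ψ) 0 :=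
          sup_affine_max (vhat ψ) _ _ (by positivity)
  rw [key_set m W νlow hW Lhat hLhat' hpos_hat,
    key_set m (W * (1 + ε)) (ν₀ + (νlow - ν₀) / (1 + ε)) (by positivity) Lcheck hLcheck' hpos_check]
end
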